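/- arXiv:1306.1935 — 2 statements merged into one kernel-verified Lean document; each statement's English description precedes it below -/
import Mathlib

section
/- Let λ ≥ 1 be a cardinal and let B⁰_λ(S) be a topological Brandt λ⁰-extension of a semitopological monoid S with zero in the class of Hausdorff semitopological semigroups. If B⁰_λ(S) is countably compact, then for every open neighbourhood U of the zero 0 of B⁰_λ(S) there exist only finitely many pairs (α,β) ∈ λ × λ with S_{α,β} ⊄ U. -/
open Topology Set Filter

/-- The underlying set of the Brandt `λ⁰`-extension `B⁰_λ(S)`:
nonzero elements are triples `(α, s, β)` with `s ≠ 0`, and `none` is the zero. -/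
abbrev Brandt (S : Type*) [Zero S] (lam : Type*) : Type _ :=
  Option (lam × {s : S // s ≠ 0} × lam)

open Classical in
/-- Multiplication of the Brandt `λ⁰`-extension. -/
noncomputable def brandtMul {S : Type*} [MonoidWithZero S] {lam : Type*} :
    Brandt S lam → Brandt S lam → Brandt S lam
  | some (α, a, β), some (γ, b, δ) =>
      if h : β = γ ∧ a.1 * b.1 ≠ 0 then some (α, ⟨a.1 * b.1, h.2⟩, δ) else none
  | _, _ => none

/-- The set `S*_{α,β}` of nonzero elements of the `(α,β)` sheet. -/
def sheet {S : Type*} [Zero S] {lam : Type*} (α β : lam) : Set (Brandt S lam) :=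
  {x | ∃ s : {s : S // s ≠ 0}, x = some (α, s, β)}

/-- The sheet `S_{α,β} = S*_{α,β} ∪ {0}`. -/
def sheet0 {S : Type*} [Zero S] {lam : Type*} (α β : lam) : Set (Brandt S lam) :=
  sheet α β ∪ {none}

/-- The trace `(U)*_{α,β}` of a subset `U ⊆ S` on the `(α,β)` sheet (zero removed). -/
def sheetTrace {S : Type*} [Zero S] {lam : Type*} (α β : lam) (U : Set S) :
    Set (Brandt S lam) :=
  {x | ∃ s : {s : S // s ≠ 0}, s.1 ∈ U ∧ x = some (α, s, β)}

/-- The basic neighbourhood `U_A(0)` of zero: all sheets outside the finite set `A`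
together with the traces of `U` on the sheets from `A`. -/
def UA0 {S : Type*} [Zero S] {lam : Type*} (A : Set (lam × lam)) (U : Set S) :
    Set (Brandt S lam) :=
  {x | x = none ∨ ∃ (α β : lam) (s : {s : S // s ≠ 0}),
        x = some (α, s, β) ∧ ((α, β) ∉ A ∨ s.1 ∈ U)}

/-- The canonical topology `τ_B^S` on the Brandt `λ⁰`-extension, generated by the base
consisting of traces of open subsets of `S` on the sheets and of the sets `U_A(0)`. -/
def brandtTop (S : Type*) [Zero S] [TopologicalSpace S] (lam : Type*) :
    TopologicalSpace (Brandt S lam) :=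
  TopologicalSpace.generateFrom
    ({W | ∃ (α β : lam) (U : Set S), IsOpen U ∧ W = sheetTrace α β U} ∪
     {W | ∃ A : Set (lam × lam), A.Finite ∧
        ∃ U : Set S, IsOpen U ∧ (0 : S) ∈ U ∧ W = UA0 A U})

open Classical in
/-- The canonical copy of `S` as the sheet `S_{α,α}` inside `B⁰_λ(S)`. -/
noncomputable def brandtIncl {S : Type*} [Zero S] {lam : Type*} (α : lam) (s : S) :
    Brandt S lam :=
  if h : s = 0 then none else some (α, ⟨s, h⟩, α)

/-- Separate continuity of a multiplication. -/
def SepCont {X : Type*} [TopologicalSpace X] (m : X → X → X) : Prop :=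
  ∀ t : X, Continuous (m t) ∧ Continuous (fun x => m x t)

/-- A family of subsets is locally finite. -/
def SetLocallyFinite {X : Type*} [TopologicalSpace X] (F : Set (Set X)) : Prop :=
  ∀ x : X, ∃ U : Set X, x ∈ U ∧ IsOpen U ∧ {A ∈ F | (A ∩ U).Nonempty}.Finite

/-- `X` is pseudocompact: every locally finite family of nonempty open subsets is finite. -/
def Pseudocompact (X : Type*) [TopologicalSpace X] : Prop :=
  ∀ F : Set (Set X), (∀ U ∈ F, IsOpen U ∧ U.Nonempty) → SetLocallyFinite F → F.Finite

/-- `X` is countably pracompact: there is a dense set `A` such that every infinite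
subset of `A` has an accumulation point in `X`. -/
def CountablyPracompact (X : Type*) [TopologicalSpace X] : Prop :=
  ∃ A : Set X, Dense A ∧ ∀ B ⊆ A, B.Infinite → ∃ x : X, AccPt x (𝓟 B)

/-- `X` is countably compact: every countable open cover has a finite subcover. -/
def CountablyCompactSp (X : Type*) [TopologicalSpace X] : Prop :=
  ∀ F : Set (Set X), F.Countable → (∀ U ∈ F, IsOpen U) → ⋃₀ F = univ →
    ∃ G ⊆ F, G.Finite ∧ ⋃₀ G = univ

lemma brandtMul_none_left {S : Type*} [MonoidWithZero S] {lam : Type*}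
    (y : Brandt S lam) : brandtMul none y = none := by
  cases y <;> rfl

open Classical in
lemma brandtMul_some_some {S : Type*} [MonoidWithZero S] {lam : Type*}
    (α β γ δ : lam) (a b : {s : S // s ≠ 0}) :
    brandtMul (some (α, a, β)) (some (γ, b, δ)) =
      if h : β = γ ∧ a.1 * b.1 ≠ 0 then some (α, ⟨a.1 * b.1, h.2⟩, δ) else none := rfl

/-- A countably compact space has the accumulation point property for infinite sets. -/
lemma exists_accPt_of_infinite {X : Type*} [TopologicalSpace X]
    (hcc : CountablyCompactSp X) {B : Set X} (hB : B.Infinite) :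
    ∃ x, AccPt x (𝓟 B) := by
  by_contra h
  push_neg at h
  -- pass to a countable infinite subset
  set f : ℕ → X := fun n => (Set.Infinite.natEmbedding B hB n : X) with hf
  set B' : Set X := Set.range f with hB'
  have hB'B : B' ⊆ B := by
    rintro _ ⟨n, rfl⟩; exact (Set.Infinite.natEmbedding B hB n).2
  have hB'c : B'.Countable := Set.countable_range f
  have hB'i : B'.Infinite :=
    Set.infinite_range_of_injective
      (Subtype.val_injective.comp (Set.Infinite.natEmbedding B hB).injective)
  have hacc' : ∀ x, ¬ AccPt x (𝓟 B') := by
    intro x hx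
    exact h x (hx.mono (principal_mono.2 hB'B))
  have hnb : ∀ x : X, ∃ V : Set X, IsOpen V ∧ x ∈ V ∧ ∀ y ∈ V ∩ B', y = x := by
    intro x
    have hx := hacc' x
    rw [accPt_iff_nhds] at hx
    push_neg at hx
    obtain ⟨W, hW, hW2⟩ := hx
    obtain ⟨V, hVW, hVo, hxV⟩ := mem_nhds_iff.mp hW
    exact ⟨V, hVo, hxV, fun y hy => hW2 y ⟨hVW hy.1, hy.2⟩⟩
  choose V hVo hxV hVcap using hnb
  have hopenc : IsOpen B'ᶜ := by
    rw [isOpen_iff_mem_nhds]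
    intro x hx
    apply Filter.mem_of_superset ((hVo x).mem_nhds (hxV x))
    intro y hy hyB'
    exact hx ((hVcap x y ⟨hy, hyB'⟩) ▸ hyB')
  obtain ⟨G, hGF, hGfin, hGcov⟩ :=
    hcc (insert B'ᶜ (V '' B'))
      ((hB'c.image V).insert B'ᶜ)
      (by
        rintro W (rfl | ⟨b, _, rfl⟩)
        · exact hopenc
        · exact hVo b)
      (by
        apply Set.eq_univ_of_forall
        intro x
        by_cases hx : x ∈ B'
        · exact ⟨V x, Set.mem_insert_iff.mpr (Or.inr ⟨x, hx, rfl⟩), hxV x⟩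
        · exact ⟨B'ᶜ, Set.mem_insert _ _, hx⟩)
  have hfin : (⋃ W ∈ G, W ∩ B').Finite := by
    refine hGfin.biUnion fun W hW => ?_
    rcases hGF hW with rfl | ⟨b, _, rfl⟩
    · have : B'ᶜ ∩ B' = ∅ := by ext y; simp [and_comm]
      simp [this]
    · exact (Set.finite_singleton b).subset fun y hy => hVcap b y hy
  refine hB'i (hfin.subset ?_)
  intro b hb
  have : b ∈ ⋃₀ G := hGcov ▸ Set.mem_univ b
  obtain ⟨W, hWG, hbW⟩ := this
  exact Set.mem_biUnion hWG ⟨hbW, hb⟩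

/-- In a countably compact Hausdorff semitopological Brandt extension, every open
neighbourhood of zero contains all but finitely many sheets `S_{α,β}`. -/
theorem brandt_countablyCompact_nhds_zero {S lam : Type*} [MonoidWithZero S]
    [TopologicalSpace S] [tB : TopologicalSpace (Brandt S lam)]
    [T2Space (Brandt S lam)]
    (hsep : SepCont (brandtMul (S := S) (lam := lam)))
    (hS : ∀ t : S, Continuous (fun x => t * x) ∧ Continuous (fun x => x * t))
    (alpha : lam) (hemb : Topology.IsEmbedding (brandtIncl (S := S) (lam := lam) alpha))
    (hcc : CountablyCompactSp (Brandt S lam)) :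
    ∀ U : Set (Brandt S lam), IsOpen U → none ∈ U →
      {p : lam × lam | ¬ (sheet0 (S := S) p.1 p.2 ⊆ U)}.Finite := by
  intro U hU hU0
  by_contra hfin
  set P := {p : lam × lam | ¬ (sheet0 (S := S) p.1 p.2 ⊆ U)} with hPdef
  have hP : P.Infinite := hfin
  -- choose a point outside U on each bad sheet
  have hch : ∀ p ∈ P, ∃ s : {s : S // s ≠ 0},
      (some (p.1, s, p.2) : Brandt S lam) ∉ U := by
    intro p hp
    obtain ⟨y, hy1, hy2⟩ := Set.not_subset.mp hp
    rcases hy1 with ⟨s, rfl⟩ | hy1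
    · exact ⟨s, hy2⟩
    · simp only [Set.mem_singleton_iff] at hy1
      subst hy1
      exact absurd hU0 hy2
  obtain ⟨p0, hp0⟩ := hP.nonempty
  have : Nonempty {s : S // s ≠ 0} := ⟨(hch p0 hp0).choose⟩
  choose! s hs using hch
  set F : lam × lam → Brandt S lam := fun p => some (p.1, s p, p.2) with hFdef
  have hFinj : Set.InjOn F P := by
    intro p hp q hq h
    simp only [hFdef, Option.some_inj, Prod.mk.injEq] at h
    exact Prod.ext h.1 h.2.2
  set B := F '' P with hBdef
  have hBinf : B.Infinite := Set.Infinite.image hFinj hP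
  obtain ⟨x, hx⟩ := exists_accPt_of_infinite hcc hBinf
  have hBU : B ⊆ Uᶜ := by
    rintro _ ⟨p, hp, rfl⟩
    exact hs p hp
  have hxU : x ∉ U := by
    have hxcl : x ∈ closure B := mem_closure_iff_clusterPt.mpr (AccPt.clusterPt hx)
    have := closure_mono hBU hxcl
    rwa [hU.isClosed_compl.closure_eq] at this
  rcases x with _ | ⟨γ, t, δ⟩
  · exact hxU hU0
  -- the multiplication by idempotents
  have h10 : (1 : S) ≠ 0 := by
    intro h
    exact t.2 (by rw [← mul_one t.1, h, mul_zero])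
  set e : lam → Brandt S lam := fun i => some (i, ⟨1, h10⟩, i) with hedef
  set g : Brandt S lam → Brandt S lam :=
    fun y => brandtMul (brandtMul (e γ) y) (e δ) with hgdef
  have hgc : Continuous g := (hsep (e δ)).2.comp (hsep (e γ)).1
  have hgx : g (some (γ, t, δ)) = some (γ, t, δ) := by
    simp only [hgdef, hedef]
    rw [brandtMul_some_some, dif_pos ⟨rfl, by simpa using t.2⟩,
      brandtMul_some_some, dif_pos ⟨rfl, by simpa using t.2⟩]
    simp
  have hgn : ∀ (α β : lam) (a : {s : S // s ≠ 0}), ¬ (α = γ ∧ β = δ) →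
      g (some (α, a, β)) = none := by
    intro α β a hne
    simp only [hgdef, hedef]
    by_cases hγ : γ = α
    · subst hγ
      rw [brandtMul_some_some, dif_pos ⟨rfl, by simpa using a.2⟩,
        brandtMul_some_some, dif_neg]
      rintro ⟨rfl, -⟩
      exact hne ⟨rfl, rfl⟩
    · rw [brandtMul_some_some, dif_neg (fun hc => hγ hc.1), brandtMul_none_left]
  -- Hausdorff separation of x from zero
  obtain ⟨V, W, hVo, hWo, hxV, hnW, hd⟩ :=
    t2_separation (show (some (γ, t, δ) : Brandt S lam) ≠ none by simp)
  set N := g ⁻¹' V with hNdef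
  have hNo : IsOpen N := hVo.preimage hgc
  have hxN : (some (γ, t, δ) : Brandt S lam) ∈ N := by
    simp only [hNdef, Set.mem_preimage, hgx]
    exact hxV
  have hsub : ∀ b ∈ N ∩ B, b = F (γ, δ) := by
    rintro b ⟨hbN, p, hp, rfl⟩
    by_cases hpe : p.1 = γ ∧ p.2 = δ
    · have hpeq : p = (γ, δ) := Prod.ext hpe.1 hpe.2
      rw [hpeq]
    · exfalso
      have hnone : g (F p) = none := hgn p.1 p.2 (s p) hpe
      have : (none : Brandt S lam) ∈ V := by
        have := hbN
        simp only [hNdef, Set.mem_preimage, hnone] at this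
        exact this
      exact Set.disjoint_left.mp hd this hnW
  rw [accPt_iff_nhds] at hx
  by_cases hc : ∃ b ∈ N ∩ B, b ≠ some (γ, t, δ)
  · obtain ⟨c, hcNB, hcne⟩ := hc
    have hN' : N \ {c} ∈ 𝓝 (some (γ, t, δ) : Brandt S lam) :=
      (hNo.sdiff isClosed_singleton).mem_nhds ⟨hxN, fun h => hcne (by
        simpa using h.symm)⟩
    obtain ⟨y, ⟨hyN', hyB⟩, hyne⟩ := hx _ hN'
    have h1 := hsub y ⟨hyN'.1, hyB⟩
    have h2 := hsub c hcNB
    exact hyN'.2 (by rw [Set.mem_singleton_iff, h1, h2])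
  · push_neg at hc
    obtain ⟨y, hyNB, hyne⟩ := hx N (hNo.mem_nhds hxN)
    exact hyne (hc y hyNB)
end

section
/- Let S be a Hausdorff semitopological monoid with zero and τ_B^S the canonical topology on B⁰_λ(S). Then the tightness of (B⁰_λ(S), τ_B^S) equals the tightness of S: t(B⁰_λ(S), τ_B^S) = t(S). -/
open Topology Set Filter

/-- The tightness of a topological space: the least infinite cardinal `κ` such that
whenever `x ∈ closure A` there is `B ⊆ A` with `#B ≤ κ` and `x ∈ closure B`. -/
noncomputable def tightness (X : Type u) [TopologicalSpace X] : Cardinal.{u} :=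
  sInf {κ : Cardinal.{u} | Cardinal.aleph0 ≤ κ ∧
    ∀ (A : Set X) (x : X), x ∈ closure A →
      ∃ B ⊆ A, Cardinal.mk B ≤ κ ∧ x ∈ closure B}


/-! ### Auxiliary lemmas for `brandt_tightness` -/

section BrandtAux

variable {S lam : Type u} [MonoidWithZero S] [TopologicalSpace S]

/-- The generating family of the canonical topology. -/
def brandtGens (S : Type u) [Zero S] [TopologicalSpace S] (lam : Type u) :
    Set (Set (Brandt S lam)) :=
  {W | ∃ (α β : lam) (U : Set S), IsOpen U ∧ W = sheetTrace α β U} ∪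
  {W | ∃ A : Set (lam × lam), A.Finite ∧
      ∃ U : Set S, IsOpen U ∧ (0 : S) ∈ U ∧ W = UA0 A U}

lemma none_mem_UA0 {A : Set (lam × lam)} {W : Set S} :
    (none : Brandt S lam) ∈ UA0 A W := Or.inl rfl

lemma mem_UA0_some {A : Set (lam × lam)} {W : Set S} {α β : lam} {s : {s : S // s ≠ 0}} :
    (some (α, s, β) : Brandt S lam) ∈ UA0 A W ↔ ((α, β) ∉ A ∨ s.1 ∈ W) := by
  constructor
  · rintro (h | ⟨α', β', s', h, hc⟩)
    · exact absurd h (by simp)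
    · have h' : α = α' ∧ s = s' ∧ β = β' := by
        simpa [Prod.ext_iff] using h
      obtain ⟨rfl, rfl, rfl⟩ := h'
      exact hc
  · intro h; exact Or.inr ⟨α, β, s, rfl, h⟩

lemma mem_sheetTrace_some {α β γ δ : lam} {U : Set S} {s : {s : S // s ≠ 0}} :
    (some (γ, s, δ) : Brandt S lam) ∈ sheetTrace α β U ↔ γ = α ∧ δ = β ∧ s.1 ∈ U := by
  constructor
  · rintro ⟨t, htU, h⟩
    have h' : γ = α ∧ s = t ∧ δ = β := by
      simpa [Prod.ext_iff] using h
    obtain ⟨rfl, rfl, rfl⟩ := h'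
    exact ⟨rfl, rfl, htU⟩
  · rintro ⟨rfl, rfl, h⟩; exact ⟨s, h, rfl⟩

lemma none_not_mem_sheetTrace {α β : lam} {U : Set S} :
    (none : Brandt S lam) ∉ sheetTrace α β U := by
  rintro ⟨t, _, h⟩; exact absurd h (by simp)

lemma sheetTrace_subset_UA0 {α β : lam} {V W : Set S} {A : Set (lam × lam)}
    (h : (α, β) ∈ A → V ⊆ W) : (sheetTrace α β V : Set (Brandt S lam)) ⊆ UA0 A W := by
  rintro x ⟨s, hsV, rfl⟩
  refine Or.inr ⟨α, β, s, rfl, ?_⟩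
  by_cases hA : (α, β) ∈ A
  · exact Or.inr (h hA hsV)
  · exact Or.inl hA

lemma sheetTrace_mono {α β : lam} {V W : Set S} (h : V ⊆ W) :
    (sheetTrace α β V : Set (Brandt S lam)) ⊆ sheetTrace α β W := by
  rintro x ⟨s, hsV, rfl⟩; exact ⟨s, h hsV, rfl⟩

lemma exists_basic_ST_UA0 {α β : lam} {U W : Set S} {A : Set (lam × lam)}
    (hU : IsOpen U) (hW : IsOpen W) {s : {s : S // s ≠ 0}}
    (h1 : s.1 ∈ U) (h2 : (α, β) ∉ A ∨ s.1 ∈ W) :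
    ∃ t₃ ∈ brandtGens S lam, (some (α, s, β) : Brandt S lam) ∈ t₃ ∧
      t₃ ⊆ sheetTrace α β U ∩ UA0 A W := by
  rcases h2 with h2 | h2
  · exact ⟨sheetTrace α β U, Or.inl ⟨α, β, U, hU, rfl⟩, ⟨s, h1, rfl⟩,
      subset_inter subset_rfl (sheetTrace_subset_UA0 (fun hA => absurd hA h2))⟩
  · exact ⟨sheetTrace α β (U ∩ W), Or.inl ⟨α, β, _, hU.inter hW, rfl⟩, ⟨s, ⟨h1, h2⟩, rfl⟩,
      subset_inter (sheetTrace_mono inter_subset_left)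
        (sheetTrace_subset_UA0 (fun _ => inter_subset_right))⟩

lemma brandt_isBasis :
    @TopologicalSpace.IsTopologicalBasis (Brandt S lam) (brandtTop S lam) (brandtGens S lam) := by
  letI := brandtTop S lam
  refine ⟨?_, ?_, rfl⟩
  · rintro t₁ (⟨α₁, β₁, U₁, hU₁, rfl⟩ | ⟨A₁, hA₁, W₁, hW₁, h0₁, rfl⟩)
      t₂ (⟨α₂, β₂, U₂, hU₂, rfl⟩ | ⟨A₂, hA₂, W₂, hW₂, h0₂, rfl⟩) x ⟨hx₁, hx₂⟩
    · -- sheetTrace ∩ sheetTrace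
      obtain ⟨s, hsU₁, rfl⟩ := hx₁
      obtain ⟨rfl, rfl, hsU₂⟩ := mem_sheetTrace_some.mp hx₂
      exact ⟨sheetTrace α₁ β₁ (U₁ ∩ U₂), Or.inl ⟨α₁, β₁, _, hU₁.inter hU₂, rfl⟩,
        ⟨s, ⟨hsU₁, hsU₂⟩, rfl⟩,
        subset_inter (sheetTrace_mono inter_subset_left) (sheetTrace_mono inter_subset_right)⟩
    · -- sheetTrace ∩ UA0
      obtain ⟨s, hsU, rfl⟩ := hx₁
      exact exists_basic_ST_UA0 hU₁ hW₂ hsU (mem_UA0_some.mp hx₂)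
    · -- UA0 ∩ sheetTrace
      obtain ⟨s, hsU, rfl⟩ := hx₂
      obtain ⟨t₃, hg, hm, hsub⟩ :=
        exists_basic_ST_UA0 hU₂ hW₁ hsU (mem_UA0_some.mp hx₁)
      exact ⟨t₃, hg, hm, fun y hy => ⟨(hsub hy).2, (hsub hy).1⟩⟩
    · -- UA0 ∩ UA0
      match x with
      | none =>
          refine ⟨UA0 (A₁ ∪ A₂) (W₁ ∩ W₂),
            Or.inr ⟨A₁ ∪ A₂, hA₁.union hA₂, _, hW₁.inter hW₂, ⟨h0₁, h0₂⟩, rfl⟩,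
            none_mem_UA0, ?_⟩
          rintro y (rfl | ⟨γ, δ, t, rfl, hc⟩)
          · exact ⟨none_mem_UA0, none_mem_UA0⟩
          · refine ⟨mem_UA0_some.mpr ?_, mem_UA0_some.mpr ?_⟩
            · rcases hc with hc | hc
              · exact Or.inl (fun h => hc (Set.mem_union_left _ h))
              · exact Or.inr hc.1
            · rcases hc with hc | hc
              · exact Or.inl (fun h => hc (Set.mem_union_right _ h))
              · exact Or.inr hc.2
      | some (α, s, β) =>
          have h₁ := mem_UA0_some.mp hx₁
          have h₂ := mem_UA0_some.mp hx₂
          rcases h₁ with h₁ | h₁ <;> rcases h₂ with h₂ | h₂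
          · exact ⟨sheetTrace α β Set.univ, Or.inl ⟨α, β, _, isOpen_univ, rfl⟩,
              ⟨s, trivial, rfl⟩,
              subset_inter (sheetTrace_subset_UA0 (fun h => absurd h h₁))
                (sheetTrace_subset_UA0 (fun h => absurd h h₂))⟩
          · exact ⟨sheetTrace α β W₂, Or.inl ⟨α, β, _, hW₂, rfl⟩, ⟨s, h₂, rfl⟩,
              subset_inter (sheetTrace_subset_UA0 (fun h => absurd h h₁))
                (sheetTrace_subset_UA0 (fun _ => subset_rfl))⟩
          · exact ⟨sheetTrace α β W₁, Or.inl ⟨α, β, _, hW₁, rfl⟩, ⟨s, h₁, rfl⟩,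
              subset_inter (sheetTrace_subset_UA0 (fun _ => subset_rfl))
                (sheetTrace_subset_UA0 (fun h => absurd h h₂))⟩
          · exact ⟨sheetTrace α β (W₁ ∩ W₂), Or.inl ⟨α, β, _, hW₁.inter hW₂, rfl⟩,
              ⟨s, ⟨h₁, h₂⟩, rfl⟩,
              subset_inter (sheetTrace_subset_UA0 (fun _ => inter_subset_left))
                (sheetTrace_subset_UA0 (fun _ => inter_subset_right))⟩
  · refine Set.eq_univ_of_forall (fun x => ?_)
    refine ⟨UA0 (∅ : Set (lam × lam)) (Set.univ : Set S),
      Or.inr ⟨∅, Set.finite_empty, _, isOpen_univ, trivial, rfl⟩, ?_⟩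
    match x with
    | none => exact none_mem_UA0
    | some (α, s, β) => exact mem_UA0_some.mpr (Or.inl (Set.notMem_empty _))

lemma mem_closure_brandt {x : Brandt S lam} {A : Set (Brandt S lam)} :
    x ∈ @closure _ (brandtTop S lam) A ↔
      ∀ o ∈ brandtGens S lam, x ∈ o → (o ∩ A).Nonempty := by
  letI := brandtTop S lam
  exact brandt_isBasis.mem_closure_iff

lemma continuous_brandtIncl [T2Space S] (α : lam) :
    @Continuous S (Brandt S lam) _ (brandtTop S lam) (brandtIncl α) := by
  rw [show brandtTop S lam = TopologicalSpace.generateFrom (brandtGens S lam) from rfl]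
  refine continuous_generateFrom_iff.mpr ?_
  rintro W (⟨γ, δ, U, hU, rfl⟩ | ⟨A, hA, U, hU, h0, rfl⟩)
  · by_cases h : γ = α ∧ δ = α
    · have he : brandtIncl (S := S) (lam := lam) α ⁻¹' sheetTrace γ δ U = U ∩ {(0 : S)}ᶜ := by
        obtain ⟨rfl, rfl⟩ := h
        ext t
        by_cases ht : t = 0 <;>
          simp [brandtIncl, ht, mem_sheetTrace_some, none_not_mem_sheetTrace]
      rw [he]
      exact hU.inter isClosed_singleton.isOpen_compl
    · have he : brandtIncl (S := S) (lam := lam) α ⁻¹' sheetTrace γ δ U = ∅ := by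
        ext t
        by_cases ht : t = 0
        · simp [brandtIncl, ht, none_not_mem_sheetTrace]
        · simp only [Set.mem_preimage, brandtIncl, dif_neg ht, mem_sheetTrace_some,
            Set.mem_empty_iff_false, iff_false]
          rintro ⟨rfl, rfl, -⟩
          exact h ⟨rfl, rfl⟩
      rw [he]; exact isOpen_empty
  · by_cases hm : (α, α) ∈ A
    · have he : brandtIncl (S := S) (lam := lam) α ⁻¹' UA0 A U = U := by
        ext t
        by_cases ht : t = 0
        · simp [brandtIncl, ht, none_mem_UA0, h0]
        · simp [brandtIncl, dif_neg ht, mem_UA0_some, hm]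
      rw [he]; exact hU
    · have he : brandtIncl (S := S) (lam := lam) α ⁻¹' UA0 A U = Set.univ := by
        ext t
        by_cases ht : t = 0
        · simp [brandtIncl, ht, none_mem_UA0]
        · simp [brandtIncl, dif_neg ht, mem_UA0_some, hm]
      rw [he]; exact isOpen_univ

/-- The tightness property for a fixed cardinal. -/
def TightProp (X : Type u) [TopologicalSpace X] (κ : Cardinal.{u}) : Prop :=
  ∀ (A : Set X) (x : X), x ∈ closure A →
    ∃ B ⊆ A, Cardinal.mk B ≤ κ ∧ x ∈ closure B

lemma tightProp_of_brandt [T2Space S] [Nonempty lam] {κ : Cardinal.{u}}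
    (h : @TightProp (Brandt S lam) (brandtTop S lam) κ) : TightProp S κ := by
  letI T := brandtTop S lam
  intro A x hx
  obtain ⟨α⟩ := ‹Nonempty lam›
  have hinj : Function.Injective (brandtIncl (S := S) (lam := lam) α) := by
    intro a b hab
    by_cases ha : a = 0 <;> by_cases hb : b = 0
    · rw [ha, hb]
    · simp only [brandtIncl, dif_pos ha, dif_neg hb] at hab
      exact absurd hab (by simp)
    · simp only [brandtIncl, dif_neg ha, dif_pos hb] at hab
      exact absurd hab (by simp)
    · simp only [brandtIncl, dif_neg ha, dif_neg hb] at hab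
      have := congrArg (fun o => Option.map (fun p : lam × {s : S // s ≠ 0} × lam => p.2.1.1) o) hab
      simpa using this
  have hx' : brandtIncl α x ∈ closure (brandtIncl (S := S) (lam := lam) α '' A) :=
    image_closure_subset_closure_image (continuous_brandtIncl α) ⟨x, hx, rfl⟩
  obtain ⟨B', hB'sub, hB'card, hxB'⟩ := h _ _ hx'
  have hB'img : brandtIncl (S := S) (lam := lam) α '' (brandtIncl α ⁻¹' B' ∩ A) = B' := by
    apply subset_antisymm
    · rintro y ⟨b, ⟨hb, -⟩, rfl⟩; exact hb
    · intro y hy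
      obtain ⟨a, haA, rfl⟩ := hB'sub hy
      exact ⟨a, ⟨hy, haA⟩, rfl⟩
  refine ⟨brandtIncl α ⁻¹' B' ∩ A, Set.inter_subset_right, ?_, ?_⟩
  · calc Cardinal.mk ↥(brandtIncl α ⁻¹' B' ∩ A)
        = Cardinal.mk ↥(brandtIncl (S := S) (lam := lam) α '' (brandtIncl α ⁻¹' B' ∩ A)) :=
          (Cardinal.mk_image_eq hinj).symm
      _ = Cardinal.mk ↥B' := by rw [hB'img]
      _ ≤ κ := hB'card
  · rw [mem_closure_iff]
    intro V hV hxV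
    by_cases hx0 : x = 0
    · have hgen : UA0 {((α, α) : lam × lam)} V ∈ brandtGens S lam :=
        Or.inr ⟨{(α, α)}, Set.finite_singleton _, V, hV, hx0 ▸ hxV, rfl⟩
      have hxn : brandtIncl (S := S) (lam := lam) α x ∈ UA0 {((α, α) : lam × lam)} V := by
        simp only [brandtIncl, hx0, dif_pos]
        exact none_mem_UA0
      obtain ⟨y, hyU, hyB'⟩ := mem_closure_brandt.mp hxB' _ hgen hxn
      obtain ⟨b, hbA, rfl⟩ := hB'sub hyB'
      by_cases hb0 : b = 0
      · exact ⟨b, hb0 ▸ (hx0 ▸ hxV), ⟨hyB', hbA⟩⟩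
      · simp only [brandtIncl, dif_neg hb0] at hyU hyB'
        rcases mem_UA0_some.mp hyU with hc | hc
        · exact absurd rfl hc
        · refine ⟨b, hc, ⟨show brandtIncl α b ∈ B' from ?_, hbA⟩⟩
          simp only [brandtIncl, dif_neg hb0]; exact hyB'
    · have hgen : sheetTrace α α (V ∩ {(0 : S)}ᶜ) ∈ brandtGens S lam :=
        Or.inl ⟨α, α, _, hV.inter isClosed_singleton.isOpen_compl, rfl⟩
      have hxmem : brandtIncl (S := S) (lam := lam) α x ∈ sheetTrace α α (V ∩ {(0 : S)}ᶜ) := by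
        simp only [brandtIncl, dif_neg hx0]
        exact ⟨⟨x, hx0⟩, ⟨hxV, hx0⟩, rfl⟩
      obtain ⟨y, hyT, hyB'⟩ := mem_closure_brandt.mp hxB' _ hgen hxmem
      obtain ⟨t, htV, rfl⟩ := hyT
      obtain ⟨b, hbA, hbe⟩ := hB'sub hyB'
      have hb0 : b ≠ 0 := by
        intro hb; rw [hb] at hbe; simp only [brandtIncl, dif_pos] at hbe
        exact absurd hbe (by simp)
      simp only [brandtIncl, dif_neg hb0] at hbe
      have hbt : b = t.1 := by
        have : (⟨b, hb0⟩ : {s : S // s ≠ 0}) = t := by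
          have h' : α = α ∧ (⟨b, hb0⟩ : {s : S // s ≠ 0}) = t ∧ α = α := by
            simpa [Prod.ext_iff] using hbe
          exact h'.2.1
        exact congrArg Subtype.val this
      refine ⟨b, hbt ▸ htV.1, show brandtIncl α b ∈ B' from ?_, hbA⟩
      simp only [brandtIncl, dif_neg hb0]; rw [hbe]; exact hyB'

lemma tightProp_to_brandt [Nonempty lam] {κ : Cardinal.{u}} (hκ : Cardinal.aleph0 ≤ κ)
    (h : TightProp S κ) : @TightProp (Brandt S lam) (brandtTop S lam) κ := by
  classical
  letI T := brandtTop S lam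
  intro A x hx
  rcases x with _ | ⟨α, s, β⟩
  · -- the zero of the Brandt extension
    by_cases hA0 : (none : Brandt S lam) ∈ A
    · refine ⟨{none}, Set.singleton_subset_iff.mpr hA0, ?_, subset_closure rfl⟩
      exact le_trans (le_of_eq (Cardinal.mk_singleton _))
        (le_trans Cardinal.one_lt_aleph0.le hκ)
    set P : Set (lam × lam) :=
      {p | ((sheet p.1 p.2 : Set (Brandt S lam)) ∩ A).Nonempty} with hPdef
    by_cases hP : P.Infinite
    · -- infinitely many sheets meet `A`
      obtain ⟨f, hfinj, hfP⟩ : ∃ f : ℕ → lam × lam, Function.Injective f ∧ ∀ n, f n ∈ P :=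
        ⟨fun n => (Set.Infinite.natEmbedding P hP n : lam × lam),
          fun m n hmn => by
            simpa using (Set.Infinite.natEmbedding P hP).injective (Subtype.ext hmn),
          fun n => (Set.Infinite.natEmbedding P hP n).2⟩
      have hch : ∀ n : ℕ, ∃ y, y ∈ (sheet (f n).1 (f n).2 : Set (Brandt S lam)) ∩ A :=
        fun n => hfP n
      choose a ha using hch
      refine ⟨Set.range a, ?_, ?_, ?_⟩
      · rintro y ⟨n, rfl⟩; exact (ha n).2
      · exact le_trans (Cardinal.mk_le_aleph0_iff.mpr
          (Set.countable_range a).to_subtype) hκ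
      · refine mem_closure_brandt.mpr ?_
        rintro o (⟨γ, δ, U, hU, rfl⟩ | ⟨A', hA', W, hW, h0W, rfl⟩) ho
        · exact absurd ho none_not_mem_sheetTrace
        · have hR : (Set.range f).Infinite := Set.infinite_range_of_injective hfinj
          obtain ⟨p, ⟨n, rfl⟩, hpA'⟩ := (hR.diff hA').nonempty
          obtain ⟨t, hteq⟩ := (ha n).1
          refine ⟨a n, ?_, ⟨n, rfl⟩⟩
          rw [hteq]
          exact mem_UA0_some.mpr (Or.inl hpA')
    · -- only finitely many sheets meet `A`
      have hPf : P.Finite := Set.not_infinite.mp hP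
      have hex : ∃ (α β : lam), (0 : S) ∈
          closure {t : S | ∃ ht : t ≠ 0, (some (α, ⟨t, ht⟩, β) : Brandt S lam) ∈ A} := by
        by_contra hno
        push_neg at hno
        set U : Set S := ⋂ p ∈ P,
          (closure {t : S | ∃ ht : t ≠ 0,
            (some (p.1, ⟨t, ht⟩, p.2) : Brandt S lam) ∈ A})ᶜ with hUdef
        have hUopen : IsOpen U := hPf.isOpen_biInter fun p _ => isClosed_closure.isOpen_compl
        have h0U : (0 : S) ∈ U := Set.mem_iInter₂.mpr fun p _ => hno p.1 p.2
        obtain ⟨y, hyU, hyA⟩ := mem_closure_brandt.mp hx _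
          (Or.inr ⟨P, hPf, U, hUopen, h0U, rfl⟩ : UA0 P U ∈ brandtGens S lam) none_mem_UA0
        rcases y with _ | ⟨γ, t, δ⟩
        · exact hA0 hyA
        · have hPmem : (γ, δ) ∈ P := ⟨some (γ, t, δ), ⟨t, rfl⟩, hyA⟩
          rcases mem_UA0_some.mp hyU with hc | hc
          · exact hc hPmem
          · exact (Set.mem_iInter₂.mp hc (γ, δ) hPmem) (subset_closure ⟨t.2, hyA⟩)
      obtain ⟨α, β, h0cl⟩ := hex
      obtain ⟨B', hB'sub, hB'card, h0B'⟩ := h _ 0 h0cl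
      have hB'ne : ∀ t ∈ B', t ≠ 0 := fun t ht => (hB'sub ht).choose
      refine ⟨(fun t => if ht : t = 0 then none else some (α, ⟨t, ht⟩, β)) '' B', ?_,
        Cardinal.mk_image_le.trans hB'card, ?_⟩
      · rintro y ⟨t, htB', rfl⟩
        obtain ⟨ht0, htA⟩ := hB'sub htB'
        simpa only [dif_neg ht0] using htA
      · refine mem_closure_brandt.mpr ?_
        rintro o (⟨γ, δ, U, hU, rfl⟩ | ⟨A', hA', W, hW, h0W, rfl⟩) ho
        · exact absurd ho none_not_mem_sheetTrace
        · by_cases hm : (α, β) ∈ A'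
          · obtain ⟨t, htW, htB'⟩ := mem_closure_iff.mp h0B' W hW h0W
            have ht0 : t ≠ 0 := hB'ne t htB'
            refine ⟨some (α, ⟨t, ht0⟩, β), mem_UA0_some.mpr (Or.inr htW), ⟨t, htB', dif_neg ht0⟩⟩
          · obtain ⟨t, htB'⟩ := Set.Nonempty.of_closure ⟨(0 : S), h0B'⟩
            have ht0 : t ≠ 0 := hB'ne t htB'
            refine ⟨some (α, ⟨t, ht0⟩, β), mem_UA0_some.mpr (Or.inl hm), ⟨t, htB', dif_neg ht0⟩⟩
  · -- a nonzero point of the Brandt extension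
    have hscl : s.1 ∈ closure
        {t : S | ∃ ht : t ≠ 0, (some (α, ⟨t, ht⟩, β) : Brandt S lam) ∈ A} := by
      rw [mem_closure_iff]
      intro V hV hsV
      obtain ⟨y, hyT, hyA⟩ := mem_closure_brandt.mp hx _
        (Or.inl ⟨α, β, V, hV, rfl⟩ : sheetTrace α β V ∈ brandtGens S lam) ⟨s, hsV, rfl⟩
      obtain ⟨t, htV, rfl⟩ := hyT
      exact ⟨t.1, htV, t.2, hyA⟩
    obtain ⟨B', hB'sub, hB'card, hsB'⟩ := h _ s.1 hscl
    have hB'ne : ∀ t ∈ B', t ≠ 0 := fun t ht => (hB'sub ht).choose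
    refine ⟨(fun t => if ht : t = 0 then none else some (α, ⟨t, ht⟩, β)) '' B', ?_,
      Cardinal.mk_image_le.trans hB'card, ?_⟩
    · rintro y ⟨t, htB', rfl⟩
      obtain ⟨ht0, htA⟩ := hB'sub htB'
      simpa only [dif_neg ht0] using htA
    · refine mem_closure_brandt.mpr ?_
      rintro o (⟨γ, δ, U, hU, rfl⟩ | ⟨A', hA', W, hW, h0W, rfl⟩) ho
      · obtain ⟨heq1, heq2, hsU⟩ := mem_sheetTrace_some.mp ho
        subst heq1; subst heq2
        obtain ⟨t, htU, htB'⟩ := mem_closure_iff.mp hsB' U hU hsU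
        have ht0 : t ≠ 0 := hB'ne t htB'
        refine ⟨some (α, ⟨t, ht0⟩, β), ⟨⟨t, ht0⟩, htU, rfl⟩, ⟨t, htB', dif_neg ht0⟩⟩
      · rcases mem_UA0_some.mp ho with hm | hm
        · obtain ⟨t, htB'⟩ := Set.Nonempty.of_closure ⟨s.1, hsB'⟩
          have ht0 : t ≠ 0 := hB'ne t htB'
          refine ⟨some (α, ⟨t, ht0⟩, β), mem_UA0_some.mpr (Or.inl hm), ⟨t, htB', dif_neg ht0⟩⟩
        · obtain ⟨t, htW, htB'⟩ := mem_closure_iff.mp hsB' W hW hm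
          have ht0 : t ≠ 0 := hB'ne t htB'
          refine ⟨some (α, ⟨t, ht0⟩, β), mem_UA0_some.mpr (Or.inr htW), ⟨t, htB', dif_neg ht0⟩⟩

end BrandtAux

/-- The tightness of the Brandt extension with the canonical topology equals the
tightness of `S`. -/
theorem brandt_tightness {S lam : Type u} [MonoidWithZero S] [TopologicalSpace S]
    [T2Space S] [Nonempty lam] (hsep : SepCont (fun x y : S => x * y)) :
    @tightness (Brandt S lam) (brandtTop S lam) = tightness S := by
  unfold tightness
  congr 1
  ext κ
  simp only [Set.mem_setOf_eq]
  constructor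
  · rintro ⟨hκ, hp⟩
    exact ⟨hκ, tightProp_of_brandt (lam := lam) hp⟩
  · rintro ⟨hκ, hp⟩
    exact ⟨hκ, tightProp_to_brandt (lam := lam) hκ hp⟩
end
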